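/- Let t ≥ 3 and k ≥ 3 be integers, let 1 ≤ n_1 ≤ n_2 ≤ … ≤ n_t and 1 ≤ m_1 ≤ m_2 ≤ … ≤ m_k, and consider the complete multipartite graphs K_{n_1,…,n_t} and K_{m_1,…,m_k}. Then γ_{P,c}(K_{n_1,…,n_t} × K_{m_1,…,m_k}) = 2 if n_1 = n_2 = 1 and m_1 = m_2 = 1, and γ_{P,c}(K_{n_1,…,n_t} × K_{m_1,…,m_k}) = 3 otherwise. -/

import Mathlib

open SimpleGraph

variable {V : Type*} {α β : Type*}

/-- The monitored set `M(S)`: least set containing the closed neighborhood of `S`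
and closed under the propagation rule (a monitored vertex all of whose neighbors,
except possibly one, are monitored forces that remaining neighbor). -/
inductive Monitored (G : SimpleGraph V) (S : Set V) : V → Prop
  | mem : ∀ {v}, v ∈ S → Monitored G S v
  | dom : ∀ {v w}, v ∈ S → G.Adj v w → Monitored G S w
  | prop : ∀ {v w}, Monitored G S v → G.Adj v w →
      (∀ u, G.Adj v u → u ≠ w → Monitored G S u) → Monitored G S w

/-- `S` is a power dominating set of `G`. -/
def IsPDS (G : SimpleGraph V) (S : Set V) : Prop := ∀ v, Monitored G S v

/-- `S` is a connected power dominating set of `G`. -/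
def IsCPDS (G : SimpleGraph V) (S : Set V) : Prop :=
  IsPDS G S ∧ (G.induce S).Connected

/-- The connected power domination number `γ_{P,c}(G)`. -/
noncomputable def cpdn (G : SimpleGraph V) : ℕ :=
  sInf {n | ∃ S : Finset V, S.card = n ∧ IsCPDS G (S : Set V)}

/-- Zero-forcing: least set containing `Z` closed under the color-change rule. -/
inductive Forced (G : SimpleGraph V) (Z : Set V) : V → Prop
  | mem : ∀ {v}, v ∈ Z → Forced G Z v
  | force : ∀ {v w}, Forced G Z v → G.Adj v w →
      (∀ u, G.Adj v u → u ≠ w → Forced G Z u) → Forced G Z w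

/-- `Z` is a zero forcing set of `G`. -/
def IsZFS (G : SimpleGraph V) (Z : Set V) : Prop := ∀ v, Forced G Z v

/-- `Z` is a connected zero forcing set of `G`. -/
def IsCZFS (G : SimpleGraph V) (Z : Set V) : Prop :=
  IsZFS G Z ∧ (G.induce Z).Connected

/-- The connected zero forcing number `Z_c(G)`. -/
noncomputable def czfn (G : SimpleGraph V) : ℕ :=
  sInf {n | ∃ Z : Finset V, Z.card = n ∧ IsCZFS G (Z : Set V)}

/-- `S` is a dominating set of `G`: `N[S] = V(G)`. -/
def IsDomSet (G : SimpleGraph V) (S : Set V) : Prop :=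
  ∀ v, ∃ u ∈ S, u = v ∨ G.Adj u v

/-- `S` is a connected dominating set of `G`. -/
def IsCDS (G : SimpleGraph V) (S : Set V) : Prop :=
  IsDomSet G S ∧ (G.induce S).Connected

/-- The domination number `γ(G)`. -/
noncomputable def domNum (G : SimpleGraph V) : ℕ :=
  sInf {n | ∃ S : Finset V, S.card = n ∧ IsDomSet G (S : Set V)}

/-- The connected domination number `γ_c(G)`. -/
noncomputable def cdomNum (G : SimpleGraph V) : ℕ :=
  sInf {n | ∃ S : Finset V, S.card = n ∧ IsCDS G (S : Set V)}

/-- The lexicographic product `G ∘ H`. -/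
def lexProd (G : SimpleGraph α) (H : SimpleGraph β) : SimpleGraph (α × β) where
  Adj x y := G.Adj x.1 y.1 ∨ (x.1 = y.1 ∧ H.Adj x.2 y.2)
  symm := ⟨by
    rintro ⟨a, b⟩ ⟨c, d⟩ (h | ⟨h1, h2⟩)
    · exact Or.inl h.symm
    · exact Or.inr ⟨h1.symm, h2.symm⟩⟩
  loopless := ⟨by
    rintro ⟨a, b⟩ (h | ⟨-, h⟩)
    · exact G.loopless.irrefl a h
    · exact H.loopless.irrefl b h⟩

/-- The tensor (direct) product `G × H`. -/
def tensorProd (G : SimpleGraph α) (H : SimpleGraph β) : SimpleGraph (α × β) where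
  Adj x y := G.Adj x.1 y.1 ∧ H.Adj x.2 y.2
  symm := ⟨fun _ _ ⟨h1, h2⟩ => ⟨h1.symm, h2.symm⟩⟩
  loopless := ⟨fun x ⟨h1, _⟩ => G.loopless.irrefl x.1 h1⟩

/-- A vertex `v` is universal in `G`. -/
def IsUniversal (G : SimpleGraph V) (v : V) : Prop := ∀ w, w ≠ v → G.Adj v w

/-- The join of a single vertex (`none`) with the graph `G` (on `some` vertices). -/
def coneGraph (G : SimpleGraph α) : SimpleGraph (Option α) where
  Adj x y := match x, y with
    | none, none => False
    | none, some _ => True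
    | some _, none => True
    | some a, some b => G.Adj a b
  symm := ⟨by rintro (_ | a) (_ | b) h <;> first | trivial | exact h.symm⟩
  loopless := ⟨by rintro (_ | a) h <;> first | trivial | exact G.loopless.irrefl a h⟩

/-- The wheel `W_n`: the join of a single vertex with the cycle `C_n`. -/
def wheelGraph (n : ℕ) : SimpleGraph (Option (Fin n)) := coneGraph (cycleGraph n)

/-- The fan `F_n`: the join of a single vertex with the path `P_n`. -/
def fanGraph (n : ℕ) : SimpleGraph (Option (Fin n)) := coneGraph (pathGraph n)

-- ===== auxiliary lemmas =====

-- === aux ===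

lemma monitored_subset (G : SimpleGraph V) (S : Set V) (P : V → Prop)
    (h1 : ∀ s ∈ S, P s) (h2 : ∀ s ∈ S, ∀ w, G.Adj s w → P w)
    (h3 : ∀ v w, P v → G.Adj v w → ¬ P w → ∃ u, G.Adj v u ∧ u ≠ w ∧ ¬ P u) :
    ∀ v, Monitored G S v → P v := by
  intro v h
  induction h with
  | mem hv => exact h1 _ hv
  | dom hv hadj => exact h2 _ hv _ hadj
  | prop hv hadj hall ihv ihall =>
    by_contra hw
    obtain ⟨u, hu1, hu2, hu3⟩ := h3 _ _ ihv hadj hw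
    exact hu3 (ihall u hu1 hu2)

lemma connected_star (G : SimpleGraph V) (S : Set V) (x : V) (hx : x ∈ S)
    (h : ∀ a ∈ S, a = x ∨ G.Adj x a) : (G.induce S).Connected := by
  rw [connected_iff]
  refine ⟨?_, ⟨⟨x, hx⟩⟩⟩
  have key : ∀ c : S, (G.induce S).Reachable ⟨x, hx⟩ c := by
    rintro ⟨c, hc⟩
    rcases h c hc with rfl | hadj
    · exact Reachable.refl _
    · exact Adj.reachable hadj
  intro a b
  exact (key a).symm.trans (key b)

lemma adj_of_connected_pair (G : SimpleGraph V) {u v : V} (huv : u ≠ v) (S : Set V)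
    (hu : u ∈ S) (hv : v ∈ S) (hS : ∀ w ∈ S, w = u ∨ w = v)
    (h : (G.induce S).Connected) : G.Adj u v := by
  have hr := h.preconnected ⟨u, hu⟩ ⟨v, hv⟩
  obtain ⟨w⟩ := hr
  cases w with
  | nil => exact absurd rfl huv
  | cons h' p =>
    rename_i x
    have hadj : G.Adj u x.1 := h'
    rcases hS x.1 x.2 with hxu | hxv
    · rw [hxu] at hadj; exact absurd hadj (G.loopless.irrefl u)
    · rwa [hxv] at hadj

lemma exists_third {N : ℕ} (h : 3 ≤ N) (a b : Fin N) : ∃ c : Fin N, c ≠ a ∧ c ≠ b := by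
  by_cases h0 : a.val ≠ 0 ∧ b.val ≠ 0
  · exact ⟨⟨0, by omega⟩, Fin.ne_of_val_ne (by exact fun hc => h0.1 hc.symm),
      Fin.ne_of_val_ne (by exact fun hc => h0.2 hc.symm)⟩
  by_cases h1 : a.val ≠ 1 ∧ b.val ≠ 1
  · exact ⟨⟨1, by omega⟩, Fin.ne_of_val_ne (by exact fun hc => h1.1 hc.symm),
      Fin.ne_of_val_ne (by exact fun hc => h1.2 hc.symm)⟩
  · refine ⟨⟨2, by omega⟩, Fin.ne_of_val_ne ?_, Fin.ne_of_val_ne ?_⟩ <;>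
      · show (2 : ℕ) ≠ _
        omega

section Multipartite

variable {t k : ℕ} {n : Fin t → ℕ} {m : Fin k → ℕ}

local notation "W" => ((Σ i, Fin (n i)) × (Σ j, Fin (m j)))

/-- The tensor product graph. -/
local notation "T" => tensorProd (completeMultipartiteGraph (fun i => Fin (n i)))
    (completeMultipartiteGraph (fun j => Fin (m j)))

lemma T_adj {u v : W} : (T).Adj u v ↔ u.1.1 ≠ v.1.1 ∧ u.2.1 ≠ v.2.1 := Iff.rfl

lemma exists_ne_fin {N : ℕ} (h : 2 ≤ N) (a : Fin N) : ∃ b : Fin N, b ≠ a := by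
  by_cases h0 : a.val = 0
  · exact ⟨⟨1, by omega⟩, Fin.ne_of_val_ne (show (1:ℕ) ≠ a.val by omega)⟩
  · exact ⟨⟨0, by omega⟩, Fin.ne_of_val_ne (show (0:ℕ) ≠ a.val by omega)⟩

/-- If some class `(i0, j0)` has at least two vertices (in one coordinate),
and every vertex of `S` is in the row or the column of that class but not in the
class itself, then `S` is not a power dominating set. -/
lemma not_pds_class (hnpos : ∀ i, 1 ≤ n i) (hmpos : ∀ j, 1 ≤ m j)
    (i0 : Fin t) (j0 : Fin k) (h2 : 2 ≤ n i0 ∨ 2 ≤ m j0) (S : Set W)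
    (hS : ∀ s ∈ S, (s.1.1 = i0 ∨ s.2.1 = j0) ∧ ¬(s.1.1 = i0 ∧ s.2.1 = j0)) :
    ¬ IsPDS (T) S := by
  intro hpds
  have key := monitored_subset (T) S (fun x => ¬(x.1.1 = i0 ∧ x.2.1 = j0))
    (fun s hs => (hS s hs).2)
    (by
      rintro s hs w hadj ⟨hw1, hw2⟩
      rcases (hS s hs).1 with h | h
      · exact hadj.1 (h.trans hw1.symm)
      · exact hadj.2 (h.trans hw2.symm))
    (by
      rintro v ⟨⟨iw, aw⟩, ⟨jw, bw⟩⟩ hPv hadj hPw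
      simp only [not_not] at hPw
      obtain ⟨hw1, hw2⟩ := hPw
      subst hw1; subst hw2
      rcases h2 with h2 | h2
      · obtain ⟨a, ha⟩ := exists_ne_fin h2 aw
        refine ⟨(⟨iw, a⟩, ⟨jw, bw⟩), ⟨hadj.1, hadj.2⟩, ?_, not_not_intro ⟨rfl, rfl⟩⟩
        intro hc
        apply ha
        have := congrArg Prod.fst hc
        simpa using this
      · obtain ⟨b, hb⟩ := exists_ne_fin h2 bw
        refine ⟨(⟨iw, aw⟩, ⟨jw, b⟩), ⟨hadj.1, hadj.2⟩, ?_, not_not_intro ⟨rfl, rfl⟩⟩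
        intro hc
        apply hb
        have := congrArg Prod.snd hc
        simpa using this)
  exact key (⟨i0, ⟨0, hnpos i0⟩⟩, ⟨j0, ⟨0, hmpos j0⟩⟩) (hpds _) ⟨rfl, rfl⟩


lemma ne_of_fst_idx {x y : W} (h : x.1.1 ≠ y.1.1) : x ≠ y := fun hc => h (by rw [hc])

lemma ne_of_snd_idx {x y : W} (h : x.2.1 ≠ y.2.1) : x ≠ y := fun hc => h (by rw [hc])

lemma not_pds_singleton (ht : 3 ≤ t) (hk : 3 ≤ k)
    (hnpos : ∀ i, 1 ≤ n i) (hmpos : ∀ j, 1 ≤ m j) (s : W) :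
    ¬ IsPDS (T) ({s} : Set W) := by
  intro hpds
  have key := monitored_subset (T) {s}
    (fun x => ¬((x.1.1 = s.1.1 ∨ x.2.1 = s.2.1) ∧ x ≠ s))
    (by rintro x rfl; simp)
    (by
      rintro x rfl w hadj
      rintro ⟨hdisj, -⟩
      rcases hdisj with h | h
      · exact hadj.1 h.symm
      · exact hadj.2 h.symm)
    (by
      intro v w hPv hadj hPw
      obtain ⟨hdisj, hne⟩ := of_not_not hPw
      rcases not_and_or.mp hPv with hv | hv
      · -- v.1.1 ≠ s.1.1 ∧ v.2.1 ≠ s.2.1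
        obtain ⟨hv1, hv2⟩ := not_or.mp hv
        rcases hdisj with hw | hw
        · obtain ⟨c, hc1, hc2⟩ := exists_third ht v.1.1 s.1.1
          refine ⟨(⟨c, ⟨0, hnpos c⟩⟩, ⟨s.2.1, ⟨0, hmpos _⟩⟩), ⟨hc1.symm, hv2⟩,
            ne_of_fst_idx (show c ≠ w.1.1 from hw ▸ hc2), not_not_intro ⟨Or.inr rfl, ?_⟩⟩
          exact ne_of_fst_idx hc2
        · obtain ⟨c, hc1, hc2⟩ := exists_third hk v.2.1 s.2.1
          refine ⟨(⟨s.1.1, ⟨0, hnpos _⟩⟩, ⟨c, ⟨0, hmpos c⟩⟩), ⟨hv1, hc1.symm⟩,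
            ne_of_snd_idx (show c ≠ w.2.1 from hw ▸ hc2), not_not_intro ⟨Or.inl rfl, ?_⟩⟩
          exact ne_of_snd_idx hc2
      · -- v = s
        rw [of_not_not hv] at hadj
        rcases hdisj with h | h
        · exact (hadj.1 h.symm).elim
        · exact (hadj.2 h.symm).elim)
  obtain ⟨c, hc1, -⟩ := exists_third hk s.2.1 s.2.1
  exact key (s.1, ⟨c, ⟨0, hmpos c⟩⟩) (hpds _)
    ⟨Or.inl rfl, ne_of_snd_idx hc1⟩


lemma eq_of_class_singleton {x y : W} (h1 : x.1.1 = y.1.1) (h2 : x.2.1 = y.2.1)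
    (hn : n x.1.1 = 1) (hm : m x.2.1 = 1) : x = y := by
  obtain ⟨⟨i, a⟩, ⟨j, b⟩⟩ := x
  obtain ⟨⟨i', a'⟩, ⟨j', b'⟩⟩ := y
  simp only at h1 h2 hn hm
  subst h1; subst h2
  have ha : a = a' := Fin.ext (by have := a.isLt; have := a'.isLt; omega)
  have hb : b = b' := Fin.ext (by have := b.isLt; have := b'.isLt; omega)
  rw [ha, hb]

lemma cpds_three (ht : 3 ≤ t) (hk : 3 ≤ k)
    (hnpos : ∀ i, 1 ≤ n i) (hmpos : ∀ j, 1 ≤ m j) :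
    ∃ S : Finset W, S.card = 3 ∧ IsCPDS (T) (S : Set W) := by
  classical
  set x : W := (⟨⟨0, by omega⟩, ⟨0, hnpos _⟩⟩, ⟨⟨0, by omega⟩, ⟨0, hmpos _⟩⟩) with hxdef
  set y : W := (⟨⟨1, by omega⟩, ⟨0, hnpos _⟩⟩, ⟨⟨1, by omega⟩, ⟨0, hmpos _⟩⟩) with hydef
  set z : W := (⟨⟨2, by omega⟩, ⟨0, hnpos _⟩⟩, ⟨⟨2, by omega⟩, ⟨0, hmpos _⟩⟩) with hzdef
  have hxi : x.1.1.val = 0 := rfl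
  have hxj : x.2.1.val = 0 := rfl
  have hyi : y.1.1.val = 1 := rfl
  have hyj : y.2.1.val = 1 := rfl
  have hzi : z.1.1.val = 2 := rfl
  have hzj : z.2.1.val = 2 := rfl
  have hxy : x ≠ y := ne_of_fst_idx (Fin.ne_of_val_ne (by omega))
  have hxz : x ≠ z := ne_of_fst_idx (Fin.ne_of_val_ne (by omega))
  have hyz : y ≠ z := ne_of_fst_idx (Fin.ne_of_val_ne (by omega))
  refine ⟨{x, y, z}, ?_, ?_, ?_⟩
  · rw [Finset.card_insert_of_notMem (by simp [hxy, hxz]),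
      Finset.card_pair hyz]
  · intro v
    have hxmem : x ∈ (({x, y, z} : Finset W) : Set W) := by simp
    have hymem : y ∈ (({x, y, z} : Finset W) : Set W) := by simp
    have hzmem : z ∈ (({x, y, z} : Finset W) : Set W) := by simp
    by_cases h0 : v.1.1.val ≠ 0 ∧ v.2.1.val ≠ 0
    · exact Monitored.dom hxmem ⟨Fin.ne_of_val_ne (by omega), Fin.ne_of_val_ne (by omega)⟩
    by_cases h1 : v.1.1.val ≠ 1 ∧ v.2.1.val ≠ 1
    · exact Monitored.dom hymem ⟨Fin.ne_of_val_ne (by omega), Fin.ne_of_val_ne (by omega)⟩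
    · rw [not_and_or, not_not, not_not] at h0 h1
      exact Monitored.dom hzmem ⟨Fin.ne_of_val_ne (by omega), Fin.ne_of_val_ne (by omega)⟩
  · apply connected_star _ _ x (by simp)
    intro a ha
    simp only [Finset.coe_insert, Finset.coe_singleton, Set.mem_insert_iff,
      Set.mem_singleton_iff] at ha
    rcases ha with rfl | rfl | rfl
    · exact Or.inl rfl
    · exact Or.inr ⟨Fin.ne_of_val_ne (by omega), Fin.ne_of_val_ne (by omega)⟩
    · exact Or.inr ⟨Fin.ne_of_val_ne (by omega), Fin.ne_of_val_ne (by omega)⟩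




set_option maxHeartbeats 1000000 in
lemma cpds_two (ht : 3 ≤ t) (hk : 3 ≤ k)
    (hnpos : ∀ i, 1 ≤ n i) (hmpos : ∀ j, 1 ≤ m j)
    (hn0 : n ⟨0, Nat.lt_of_lt_of_le (by norm_num) ht⟩ = 1) (hn1 : n ⟨1, Nat.lt_of_lt_of_le (by norm_num) ht⟩ = 1)
    (hm0 : m ⟨0, Nat.lt_of_lt_of_le (by norm_num) hk⟩ = 1) (hm1 : m ⟨1, Nat.lt_of_lt_of_le (by norm_num) hk⟩ = 1) :
    ∃ S : Finset W, S.card = 2 ∧ IsCPDS (T) (S : Set W) := by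
  classical
  have hx : ∃ x : W, x.1.1.val = 0 ∧ x.2.1.val = 0 := ⟨(⟨⟨0, by omega⟩, ⟨0, hnpos _⟩⟩, ⟨⟨0, by omega⟩, ⟨0, hmpos _⟩⟩), rfl, rfl⟩
  obtain ⟨x, hxi, hxj⟩ := hx
  have hy : ∃ y : W, y.1.1.val = 1 ∧ y.2.1.val = 1 := ⟨(⟨⟨1, by omega⟩, ⟨0, hnpos _⟩⟩, ⟨⟨1, by omega⟩, ⟨0, hmpos _⟩⟩), rfl, rfl⟩
  obtain ⟨y, hyi, hyj⟩ := hy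
  have hxy : x ≠ y := ne_of_fst_idx (Fin.ne_of_val_ne (by omega))
  have hxmem : x ∈ (({x, y} : Finset W) : Set W) := by simp
  have hymem : y ∈ (({x, y} : Finset W) : Set W) := by simp
  have hmx : ∀ w : W, w.1.1.val ≠ 0 → w.2.1.val ≠ 0 →
      Monitored (T) (({x, y} : Finset W) : Set W) w := fun w h1 h2 =>
    Monitored.dom hxmem ⟨Fin.ne_of_val_ne (by omega), Fin.ne_of_val_ne (by omega)⟩
  have hmy : ∀ w : W, w.1.1.val ≠ 1 → w.2.1.val ≠ 1 →
      Monitored (T) (({x, y} : Finset W) : Set W) w := fun w h1 h2 =>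
    Monitored.dom hymem ⟨Fin.ne_of_val_ne (by omega), Fin.ne_of_val_ne (by omega)⟩
  refine ⟨{x, y}, Finset.card_pair hxy, ?_, ?_⟩
  · intro v
    by_cases h0 : v.1.1.val ≠ 0 ∧ v.2.1.val ≠ 0
    · exact hmx v h0.1 h0.2
    by_cases h1 : v.1.1.val ≠ 1 ∧ v.2.1.val ≠ 1
    · exact hmy v h1.1 h1.2
    rw [not_and_or, not_not, not_not] at h0 h1
    -- remaining: class (0,1) or class (1,0)
    by_cases hA : v.1.1.val = 0
    · -- then v.2.1.val = 1
      have hv2 : v.2.1.val = 1 := by omega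
      -- force from (2, 0)
      obtain ⟨v2, h2i, h2j⟩ : ∃ v2 : W, v2.1.1.val = 2 ∧ v2.2.1.val = 0 := ⟨(⟨⟨2, by omega⟩, ⟨0, hnpos _⟩⟩, ⟨⟨0, by omega⟩, ⟨0, hmpos _⟩⟩), rfl, rfl⟩
      refine Monitored.prop (hmy v2 (by omega) (by omega))
        ⟨Fin.ne_of_val_ne (by omega), Fin.ne_of_val_ne (by omega)⟩ ?_
      intro u hadj hne
      have hu1 : u.1.1.val ≠ 2 := fun hc => hadj.1 (Fin.ext (by omega))
      have hu2 : u.2.1.val ≠ 0 := fun hc => hadj.2 (Fin.ext (by omega))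
      by_cases hu0 : u.1.1.val = 0
      · by_cases hu01 : u.2.1.val = 1
        · exact absurd (eq_of_class_singleton
            (show u.1.1 = v.1.1 from Fin.ext (by omega))
            (show u.2.1 = v.2.1 from Fin.ext (by omega))
            (by rw [show u.1.1 = (⟨0, by omega⟩ : Fin t) from Fin.ext hu0]; exact hn0)
            (by rw [show u.2.1 = (⟨1, by omega⟩ : Fin k) from Fin.ext hu01]; exact hm1)) hne
        · exact hmy u (by omega) hu01
      · exact hmx u hu0 hu2
    · -- v.1.1.val = 1, v.2.1.val = 0
      have hv1 : v.1.1.val = 1 := by omega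
      have hv2 : v.2.1.val = 0 := by omega
      obtain ⟨v3, h3i, h3j⟩ : ∃ v3 : W, v3.1.1.val = 2 ∧ v3.2.1.val = 1 := ⟨(⟨⟨2, by omega⟩, ⟨0, hnpos _⟩⟩, ⟨⟨1, by omega⟩, ⟨0, hmpos _⟩⟩), rfl, rfl⟩
      refine Monitored.prop (hmx v3 (by omega) (by omega))
        ⟨Fin.ne_of_val_ne (by omega), Fin.ne_of_val_ne (by omega)⟩ ?_
      intro u hadj hne
      have hu1 : u.1.1.val ≠ 2 := fun hc => hadj.1 (Fin.ext (by omega))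
      have hu2 : u.2.1.val ≠ 1 := fun hc => hadj.2 (Fin.ext (by omega))
      by_cases hu0 : u.1.1.val = 1
      · by_cases hu01 : u.2.1.val = 0
        · exact absurd (eq_of_class_singleton
            (show u.1.1 = v.1.1 from Fin.ext (by omega))
            (show u.2.1 = v.2.1 from Fin.ext (by omega))
            (by rw [show u.1.1 = (⟨1, by omega⟩ : Fin t) from Fin.ext hu0]; exact hn1)
            (by rw [show u.2.1 = (⟨0, by omega⟩ : Fin k) from Fin.ext hu01]; exact hm0)) hne
        · exact hmx u (by omega) hu01
      · exact hmy u hu0 hu2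
  · apply connected_star _ _ x (by simp)
    intro a ha
    simp only [Finset.coe_insert, Finset.coe_singleton, Set.mem_insert_iff,
      Set.mem_singleton_iff] at ha
    rcases ha with rfl | rfl
    · exact Or.inl rfl
    · exact Or.inr ⟨Fin.ne_of_val_ne (by omega), Fin.ne_of_val_ne (by omega)⟩


lemma not_cpds_small (ht : 3 ≤ t) (hk : 3 ≤ k)
    (hnpos : ∀ i, 1 ≤ n i) (hmpos : ∀ j, 1 ≤ m j)
    (S : Finset W) (hpds : IsPDS (T) (S : Set W))
    (hconn : ((T).induce (S : Set W)).Connected) : 2 ≤ S.card := by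
  by_contra hlt
  push_neg at hlt
  interval_cases h : S.card
  · obtain rfl := Finset.card_eq_zero.mp h
    obtain ⟨⟨z, hz⟩⟩ := hconn.nonempty
    simp at hz
  · obtain ⟨s, rfl⟩ := Finset.card_eq_one.mp h
    rw [Finset.coe_singleton] at hpds
    exact not_pds_singleton ht hk hnpos hmpos s hpds

theorem main_thm (ht : 3 ≤ t) (hk : 3 ≤ k)
    (hnmono : Monotone n) (hmmono : Monotone m)
    (hnpos : ∀ i, 1 ≤ n i) (hmpos : ∀ i, 1 ≤ m i) :
    (n ⟨0, Nat.lt_of_lt_of_le (by norm_num) ht⟩ = 1 ∧ n ⟨1, Nat.lt_of_lt_of_le (by norm_num) ht⟩ = 1 ∧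
        m ⟨0, Nat.lt_of_lt_of_le (by norm_num) hk⟩ = 1 ∧ m ⟨1, Nat.lt_of_lt_of_le (by norm_num) hk⟩ = 1 →
      cpdn (T) = 2) ∧
    (¬ (n ⟨0, Nat.lt_of_lt_of_le (by norm_num) ht⟩ = 1 ∧ n ⟨1, Nat.lt_of_lt_of_le (by norm_num) ht⟩ = 1 ∧
        m ⟨0, Nat.lt_of_lt_of_le (by norm_num) hk⟩ = 1 ∧ m ⟨1, Nat.lt_of_lt_of_le (by norm_num) hk⟩ = 1) →
      cpdn (T) = 3) := by
  constructor
  · rintro ⟨hn0, hn1, hm0, hm1⟩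
    obtain ⟨S2, hcard2, hcpds2⟩ := cpds_two ht hk hnpos hmpos hn0 hn1 hm0 hm1
    refine le_antisymm (Nat.sInf_le ⟨S2, hcard2, hcpds2⟩)
      (le_csInf ⟨2, S2, hcard2, hcpds2⟩ ?_)
    rintro N ⟨S, rfl, hpds, hconn⟩
    exact not_cpds_small ht hk hnpos hmpos S hpds hconn
  · intro hcase
    obtain ⟨S3, hcard3, hcpds3⟩ := cpds_three ht hk hnpos hmpos
    refine le_antisymm (Nat.sInf_le ⟨S3, hcard3, hcpds3⟩)
      (le_csInf ⟨3, S3, hcard3, hcpds3⟩ ?_)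
    rintro N ⟨S, rfl, hpds, hconn⟩
    have h2le := not_cpds_small ht hk hnpos hmpos S hpds hconn
    rcases Nat.lt_or_ge S.card 3 with hlt | hge
    · exfalso
      have hcard : S.card = 2 := by omega
      obtain ⟨u, v, huv, rfl⟩ := Finset.card_eq_two.mp hcard
      have hmemu : u ∈ ((({u, v} : Finset W)) : Set W) := by simp
      have hmemv : v ∈ ((({u, v} : Finset W)) : Set W) := by simp
      have hadj : (T).Adj u v := by
        refine adj_of_connected_pair _ huv _ hmemu hmemv ?_ hconn
        intro w hw
        simpa using hw
      have hi : u.1.1 ≠ v.1.1 := hadj.1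
      have hj : u.2.1 ≠ v.2.1 := hadj.2
      have hbig : 2 ≤ n ⟨1, by omega⟩ ∨ 2 ≤ m ⟨1, by omega⟩ := by
        have h01n : n ⟨0, by omega⟩ ≤ n ⟨1, by omega⟩ := hnmono (by rw [Fin.le_def]; exact Nat.zero_le _)
        have h01m : m ⟨0, by omega⟩ ≤ m ⟨1, by omega⟩ := hmmono (by rw [Fin.le_def]; exact Nat.zero_le _)
        have := hnpos ⟨0, by omega⟩
        have := hmpos ⟨0, by omega⟩
        by_contra hcon
        push_neg at hcon
        exact hcase ⟨by omega, by omega, by omega, by omega⟩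
      have hvals : 1 ≤ u.1.1.val ∨ 1 ≤ v.1.1.val := by
        have := Fin.val_ne_of_ne hi
        omega
      have hvals2 : 1 ≤ u.2.1.val ∨ 1 ≤ v.2.1.val := by
        have := Fin.val_ne_of_ne hj
        omega
      have hSmem : ∀ s ∈ ((({u, v} : Finset W)) : Set W), s = u ∨ s = v := by
        intro s hs; simpa using hs
      rcases hbig with h2 | h2
      · rcases hvals with h1 | h1
        · -- use class (u.1.1, v.2.1)
          have h2' : 2 ≤ n u.1.1 := le_trans h2 (hnmono (by rw [Fin.le_def]; exact h1))
          refine not_pds_class hnpos hmpos u.1.1 v.2.1 (Or.inl h2') _ ?_ hpds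
          intro s hs
          rcases hSmem s hs with rfl | rfl
          · exact ⟨Or.inl rfl, fun hc => hj hc.2⟩
          · exact ⟨Or.inr rfl, fun hc => hi hc.1.symm⟩
        · have h2' : 2 ≤ n v.1.1 := le_trans h2 (hnmono (by rw [Fin.le_def]; exact h1))
          refine not_pds_class hnpos hmpos v.1.1 u.2.1 (Or.inl h2') _ ?_ hpds
          intro s hs
          rcases hSmem s hs with rfl | rfl
          · exact ⟨Or.inr rfl, fun hc => hi hc.1⟩
          · exact ⟨Or.inl rfl, fun hc => hj hc.2.symm⟩
      · rcases hvals2 with h1 | h1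
        · have h2' : 2 ≤ m u.2.1 := le_trans h2 (hmmono (by rw [Fin.le_def]; exact h1))
          refine not_pds_class hnpos hmpos v.1.1 u.2.1 (Or.inr h2') _ ?_ hpds
          intro s hs
          rcases hSmem s hs with rfl | rfl
          · exact ⟨Or.inr rfl, fun hc => hi hc.1⟩
          · exact ⟨Or.inl rfl, fun hc => hj hc.2.symm⟩
        · have h2' : 2 ≤ m v.2.1 := le_trans h2 (hmmono (by rw [Fin.le_def]; exact h1))
          refine not_pds_class hnpos hmpos u.1.1 v.2.1 (Or.inr h2') _ ?_ hpds
          intro s hs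
          rcases hSmem s hs with rfl | rfl
          · exact ⟨Or.inl rfl, fun hc => hj hc.2⟩
          · exact ⟨Or.inr rfl, fun hc => hi hc.1.symm⟩
    · exact hge

end Multipartite


/-- `γ_{P,c}(K_{n₁,…,n_t} × K_{m₁,…,m_k})` for complete multipartite graphs with
`t, k ≥ 3` parts. -/
theorem stmt_19 (t k : ℕ) (ht : 3 ≤ t) (hk : 3 ≤ k)
    (n : Fin t → ℕ) (m : Fin k → ℕ)
    (hnmono : Monotone n) (hmmono : Monotone m)
    (hnpos : ∀ i, 1 ≤ n i) (hmpos : ∀ i, 1 ≤ m i) :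
    (n ⟨0, by omega⟩ = 1 ∧ n ⟨1, by omega⟩ = 1 ∧
        m ⟨0, by omega⟩ = 1 ∧ m ⟨1, by omega⟩ = 1 →
      cpdn (tensorProd (completeMultipartiteGraph (fun i => Fin (n i)))
        (completeMultipartiteGraph (fun i => Fin (m i)))) = 2) ∧
    (¬ (n ⟨0, by omega⟩ = 1 ∧ n ⟨1, by omega⟩ = 1 ∧
        m ⟨0, by omega⟩ = 1 ∧ m ⟨1, by omega⟩ = 1) →
      cpdn (tensorProd (completeMultipartiteGraph (fun i => Fin (n i)))
        (completeMultipartiteGraph (fun i => Fin (m i)))) = 3) := by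
  exact main_thm ht hk hnmono hmmono hnpos hmpos
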